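/- Let n ≥ 1, x ∈ EuclideanSpace ℝ (Fin n), and let q : EuclideanSpace ℝ (Fin n) → EuclideanSpace ℝ (Fin n) and θ : EuclideanSpace ℝ (Fin n) → ℝ be differentiable at x with θ(x) > 0. Let K be an n×n real positive semidefinite matrix and suppose q(x) = −K·∇θ(x) (Fourier's law evaluated at x). Let A be a finite index set and Φ : A → ℝ a family of channel powers with Φ_α ≥ 0 for all α, let r ≥ 0 be a heating rate, and let σ ∈ ℝ (the entropy rate ṡ at x) satisfy the entropy balance θ(x)·σ + div q(x) − ∑_{α∈A} Φ_α = r. Then σ + div(q/θ)(x) = (∇θ(x) ⬝ᵥ K·∇θ(x))/θ(x)² + (∑_{α∈A} Φ_α)/θ(x) + r/θ(x), and this quantity is nonnegative (the local entropy inequality / Clausius–Duhem inequality). -/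

import Mathlib

open Matrix
open scoped RealInnerProductSpace

/-- Divergence of a vector field on `EuclideanSpace ℝ (Fin n)` at a point. -/
noncomputable def vdiv {n : ℕ}
    (v : EuclideanSpace ℝ (Fin n) → EuclideanSpace ℝ (Fin n))
    (x : EuclideanSpace ℝ (Fin n)) : ℝ :=
  ∑ i, fderiv ℝ v x (EuclideanSpace.single i (1 : ℝ)) i

/-- Local entropy inequality / Clausius–Duhem:
Given Fourier's law `q x = −K ∇θ(x)` with `K` positive semidefinite,
nonnegative channel powers `Φ`, nonnegative heating `r`, and the entropy
balance `θ x * σ + div q x − ∑ Φ = r`, one has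
`σ + div (q/θ) x = (∇θ ⬝ᵥ K ∇θ)/θ² + (∑ Φ)/θ + r/θ ≥ 0`. -/
theorem local_entropy_inequality {n : ℕ} (hn : 1 ≤ n)
    (x : EuclideanSpace ℝ (Fin n))
    (q : EuclideanSpace ℝ (Fin n) → EuclideanSpace ℝ (Fin n))
    (θ : EuclideanSpace ℝ (Fin n) → ℝ)
    (hq : DifferentiableAt ℝ q x) (hθ : DifferentiableAt ℝ θ x)
    (hθx : 0 < θ x)
    (K : Matrix (Fin n) (Fin n) ℝ) (hK : K.PosSemidef)
    (hFourier : ∀ i, q x i = -(K.mulVec (fun j => gradient θ x j)) i)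
    {A : Type*} [Fintype A] (Φ : A → ℝ) (hΦ : ∀ α, 0 ≤ Φ α)
    (r : ℝ) (hr : 0 ≤ r) (σ : ℝ)
    (hbal : θ x * σ + vdiv q x - ∑ α, Φ α = r) :
    σ + vdiv (fun y => (1 / θ y) • q y) x =
      ((fun j => gradient θ x j) ⬝ᵥ K.mulVec (fun j => gradient θ x j)) / (θ x) ^ 2
        + (∑ α, Φ α) / θ x + r / θ x ∧
    0 ≤ σ + vdiv (fun y => (1 / θ y) • q y) x := by
  set g : Fin n → ℝ := fun j => gradient θ x j with hg
  have hθne : θ x ≠ 0 := hθx.ne'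
  -- derivative of θ in terms of the gradient
  have hgrad : ∀ v : EuclideanSpace ℝ (Fin n),
      fderiv ℝ θ x v = @inner ℝ _ _ (gradient θ x) v := by
    intro v
    have h := hθ.hasGradientAt.hasFDerivAt.fderiv
    rw [h]
    rfl
  have hθder : ∀ i : Fin n,
      fderiv ℝ θ x (EuclideanSpace.single i (1 : ℝ)) = g i := by
    intro i
    rw [hgrad, EuclideanSpace.inner_single_right]
    simp [hg]
  -- derivative of the scaled field
  have hinv : HasFDerivAt (fun y => (θ y)⁻¹)
      ((-(θ x ^ 2)⁻¹ : ℝ) • fderiv ℝ θ x) x :=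
    (hasDerivAt_inv hθne).comp_hasFDerivAt x hθ.hasFDerivAt
  have hsm : HasFDerivAt (fun y => (θ y)⁻¹ • q y)
      ((θ x)⁻¹ • fderiv ℝ q x
        + ((-(θ x ^ 2)⁻¹ : ℝ) • fderiv ℝ θ x).smulRight (q x)) x :=
    hinv.smul hq.hasFDerivAt
  have hfun : (fun y => (1 / θ y) • q y) = fun y => (θ y)⁻¹ • q y := by
    simp [one_div]
  have hdiv : vdiv (fun y => (1 / θ y) • q y) x
      = (θ x)⁻¹ * vdiv q x - (θ x ^ 2)⁻¹ * ∑ i, g i * q x i := by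
    rw [hfun]
    unfold vdiv
    rw [hsm.fderiv]
    have happ : ∀ i : Fin n,
        (((θ x)⁻¹ • fderiv ℝ q x
          + ((-(θ x ^ 2)⁻¹ : ℝ) • fderiv ℝ θ x).smulRight (q x))
            (EuclideanSpace.single i (1 : ℝ))) i
        = (θ x)⁻¹ * fderiv ℝ q x (EuclideanSpace.single i (1 : ℝ)) i
          - (θ x ^ 2)⁻¹ * (g i * q x i) := by
      intro i
      have := hθder i
      simp only [ContinuousLinearMap.add_apply, ContinuousLinearMap.coe_smul',
        Pi.smul_apply, ContinuousLinearMap.smulRight_apply]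
      rw [this]
      show (θ x)⁻¹ * _ + (-(θ x ^ 2)⁻¹ * g i) * q x i = _
      ring_nf
      rfl
    rw [Finset.sum_congr rfl fun i _ => happ i]
    rw [Finset.sum_sub_distrib, ← Finset.mul_sum, ← Finset.mul_sum]
  -- Fourier's law: ∑ g i * q x i = - g ⬝ᵥ K.mulVec g
  have hdot : ∑ i, g i * q x i = -(g ⬝ᵥ K.mulVec g) := by
    rw [dotProduct, ← Finset.sum_neg_distrib]
    refine Finset.sum_congr rfl fun i _ => ?_
    rw [hFourier i]
    ring
  have hKnn : 0 ≤ g ⬝ᵥ K.mulVec g := by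
    have := hK.dotProduct_mulVec_nonneg g
    simpa using this
  have hΦs : 0 ≤ ∑ α, Φ α := Finset.sum_nonneg fun α _ => hΦ α
  have hvq : vdiv q x = ∑ α, Φ α + r - θ x * σ := by linarith
  have key : σ + vdiv (fun y => (1 / θ y) • q y) x =
      (g ⬝ᵥ K.mulVec g) / (θ x) ^ 2 + (∑ α, Φ α) / θ x + r / θ x := by
    rw [hdiv, hdot, hvq]
    field_simp
    ring
  refine ⟨key, ?_⟩
  rw [key]
  have h2 : (0:ℝ) < θ x ^ 2 := by positivity
  positivity
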